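/- For all integers n, j ≥ 0 and k ≥ 1, the numbers t(n,k,r) and T(n,k,r) are inverse to each other in the first sense: ∑_{i≥0} t(n,k,i)·T(i,k,j) = δ_{nj}, where δ_{nj} is the Kronecker delta. -/

import Mathlib

open Finset

/-- Stirling numbers of the second kind: the number of partitions (equivalence
relations) of an `n`-element set into `r` nonempty blocks. -/
noncomputable def stirS2 (n r : ℕ) : ℕ :=
  Nat.card {p : Setoid (Fin n) // Nat.card (Quotient p) = r}

/-- Signed Stirling numbers of the first kind, defined by
`x(x-1)⋯(x-n+1) = ∑_{r=0}^{n} s(n,r) xʳ`. -/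
noncomputable def stirS1 (n r : ℕ) : ℤ :=
  (∏ i ∈ Finset.range n, (Polynomial.X - Polynomial.C (i : ℤ))).coeff r

/-- `Tnum n k r = T(n,k,r) = ∑_{n ≥ i_1 ≥ … ≥ i_{k-1} ≥ r} ∏_{j=1}^{k} S(i_{j-1}, i_j)`
(with `i_0 = n`, `i_k = r`), written via the equivalent recursion on `k`. -/
noncomputable def Tnum : ℕ → ℕ → ℕ → ℕ
  | n, 0, r => if n = r then 1 else 0
  | n, k + 1, r => ∑ m ∈ Finset.Icc r n, stirS2 n m * Tnum m k r

/-- `tnum n k r = t(n,k,r) = ∑_{n ≥ i_1 ≥ … ≥ i_{k-1} ≥ r} ∏_{j=1}^{k} s(i_{j-1}, i_j)`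
(with `i_0 = n`, `i_k = r`), written via the equivalent recursion on `k`. -/
noncomputable def tnum : ℕ → ℕ → ℕ → ℤ
  | n, 0, r => if n = r then 1 else 0
  | n, k + 1, r => ∑ m ∈ Finset.Icc r n, stirS1 n m * tnum m k r


section Aux
open Polynomial

-- fibers of ker
def kerFiberEquiv {α β : Type*} (p : Setoid α) :
    {f : α → β // Setoid.ker f = p} ≃ (Quotient p ↪ β) where
  toFun f := ⟨Quotient.lift f.1 (fun a b h => by
      have h2 : (Setoid.ker f.1).r a b := by rw [f.2]; exact h
      exact h2), by
    rintro ⟨a⟩ ⟨b⟩ h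
    have h2 : (Setoid.ker f.1).r a b := h
    rw [f.2] at h2
    exact Quotient.sound h2⟩
  invFun g := ⟨fun a => g ⟦a⟧, by
    ext a b
    constructor
    · intro h
      exact Quotient.exact (g.injective h)
    · intro h
      exact congrArg g (Quotient.sound h)⟩
  left_inv f := by
    ext a; rfl
  right_inv g := by
    ext ⟨a⟩; rfl

theorem stirS2_vanish {n r : ℕ} (h : n < r) : stirS2 n r = 0 := by
  rw [stirS2, Nat.card_eq_zero]
  left
  constructor
  rintro ⟨p, hp⟩
  have : Nat.card (Quotient p) ≤ n := by
    have := Nat.card_le_card_of_surjective (Quotient.mk p) Quotient.mk_surjective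
    simpa using this
  omega

theorem sum_stirS2 (n x : ℕ) :
    x ^ n = ∑ r ∈ range (n+1), stirS2 n r * x.descFactorial r := by
  classical
  haveI : Finite (Setoid (Fin n)) :=
    Finite.of_injective (fun s : Setoid (Fin n) => s.r)
      (fun a b h => by cases a; cases b; congr)
  haveI : Fintype (Setoid (Fin n)) := Fintype.ofFinite _
  have hfin : ∀ p : Setoid (Fin n), Fintype (Quotient p) := fun p => Fintype.ofFinite _
  -- card of functions
  have h1 : x ^ n = Fintype.card (Fin n → Fin x) := by simp
  have h2 : Fintype.card (Fin n → Fin x)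
      = ∑ p : Setoid (Fin n), Fintype.card {f : Fin n → Fin x // Setoid.ker f = p} := by
    rw [← Fintype.card_sigma]
    exact Fintype.card_congr (Equiv.sigmaFiberEquiv (fun f => Setoid.ker f)).symm
  have h3 : ∀ p : Setoid (Fin n),
      Fintype.card {f : Fin n → Fin x // Setoid.ker f = p}
        = x.descFactorial (Nat.card (Quotient p)) := by
    intro p
    haveI := hfin p
    rw [Fintype.card_congr (kerFiberEquiv p), Fintype.card_embedding_eq,
      Nat.card_eq_fintype_card]
    simp
  rw [h1, h2]
  simp_rw [h3]
  rw [← Finset.sum_fiberwise_of_maps_to (g := fun p : Setoid (Fin n) => Nat.card (Quotient p))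
    (t := range (n+1)) ?_ (fun p => x.descFactorial (Nat.card (Quotient p)))]
  · refine Finset.sum_congr rfl fun r _ => ?_
    rw [Finset.sum_congr rfl (fun p hp => by
      rw [(Finset.mem_filter.mp hp).2]), Finset.sum_const, smul_eq_mul]
    congr 1
    rw [stirS2, Nat.card_eq_fintype_card, Fintype.card_subtype]
  · intro p _
    rw [Finset.mem_range]
    have := Nat.card_le_card_of_surjective (Quotient.mk p) Quotient.mk_surjective
    simp only [Nat.card_eq_fintype_card]
    simp at this
    omega

noncomputable def fallPoly (n : ℕ) : ℤ[X] := ∏ i ∈ range n, (X - C (i : ℤ))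

theorem fallPoly_eval (r x : ℕ) : (fallPoly r).eval (x : ℤ) = (x.descFactorial r : ℤ) := by
  rw [fallPoly, Polynomial.eval_prod]
  simp only [eval_sub, eval_X, eval_C]
  rcases le_or_gt r x with h | h
  · rw [Nat.descFactorial_eq_prod_range]
    push_cast [Nat.cast_prod]
    exact Finset.prod_congr rfl fun i hi => by
      rw [mem_range] at hi; omega
  · rw [Nat.descFactorial_eq_zero_iff_lt.mpr h, Nat.cast_zero]
    exact Finset.prod_eq_zero (mem_range.mpr h) (by simp)

theorem fallPoly_monic (n : ℕ) : (fallPoly n).Monic :=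
  monic_prod_of_monic _ _ fun i _ => monic_X_sub_C _

theorem fallPoly_natDegree (n : ℕ) : (fallPoly n).natDegree = n := by
  rw [fallPoly, natDegree_prod_of_monic _ _ fun i _ => monic_X_sub_C _]
  simp only [natDegree_X_sub_C, Finset.sum_const, smul_eq_mul, mul_one, card_range]

theorem stirS1_vanish {n r : ℕ} (h : n < r) : stirS1 n r = 0 := by
  rw [stirS1, coeff_eq_zero_of_natDegree_lt]
  rw [show (∏ i ∈ Finset.range n, (X - C (i:ℤ))) = fallPoly n from rfl, fallPoly_natDegree]
  exact h

theorem X_pow_eq (n : ℕ) :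
    (X : ℤ[X]) ^ n = ∑ r ∈ range (n+1), C ((stirS2 n r : ℤ)) * fallPoly r := by
  by_contra hne
  have hd : (X : ℤ[X]) ^ n - ∑ r ∈ range (n+1), C ((stirS2 n r : ℤ)) * fallPoly r ≠ 0 :=
    sub_ne_zero_of_ne hne
  have hroots : ∀ x : ℕ, IsRoot ((X : ℤ[X]) ^ n - ∑ r ∈ range (n+1), C ((stirS2 n r : ℤ)) * fallPoly r) (x : ℤ) := by
    intro x
    simp only [IsRoot, eval_sub, eval_pow, eval_X, eval_finset_sum, eval_mul, eval_C,
      fallPoly_eval, sub_eq_zero]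
    exact_mod_cast congrArg (Nat.cast : ℕ → ℤ) (sum_stirS2 n x)
  have hfin := Polynomial.finite_setOf_isRoot hd
  have : Set.range (Nat.cast : ℕ → ℤ) ⊆
      {x | IsRoot ((X : ℤ[X]) ^ n - ∑ r ∈ range (n+1), C ((stirS2 n r : ℤ)) * fallPoly r) x} := by
    rintro _ ⟨x, rfl⟩; exact hroots x
  exact (Set.infinite_range_of_injective Nat.cast_injective) (hfin.subset this)

theorem orth1 {n j N : ℕ} (hn : n ≤ N) :
    (∑ m ∈ range (N+1), (stirS2 n m : ℤ) * stirS1 m j) = if n = j then 1 else 0 := by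
  have h1 : (∑ m ∈ range (N+1), (stirS2 n m : ℤ) * stirS1 m j)
      = (∑ m ∈ range (n+1), (stirS2 n m : ℤ) * stirS1 m j) := by
    symm
    apply Finset.sum_subset (by intro m hm; rw [mem_range] at *; omega)
    intro m hm hm2
    rw [mem_range] at *
    rw [stirS2_vanish (by omega)]
    simp
  have h2 := congrArg (fun p => Polynomial.coeff p j) (X_pow_eq n)
  simp only [coeff_X_pow, Polynomial.finset_sum_coeff, Polynomial.coeff_C_mul] at h2
  rw [h1]
  simp only [show ∀ m, (fallPoly m).coeff j = stirS1 m j from fun m => rfl] at h2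
  rw [← h2]
  by_cases h : n = j <;> simp [h, eq_comm]

theorem tnum_vanish : ∀ (k n i : ℕ), n < i → tnum n k i = 0
  | 0, n, i, h => by simp [tnum]; omega
  | k+1, n, i, h => by
    rw [tnum, Finset.Icc_eq_empty (by omega), Finset.sum_empty]

theorem Tnum_vanish : ∀ (k n i : ℕ), n < i → Tnum n k i = 0
  | 0, n, i, h => by simp [Tnum]; omega
  | k+1, n, i, h => by
    rw [Tnum, Finset.Icc_eq_empty (by omega), Finset.sum_empty]

/-- The numbers `t(n,k,r)` and `T(n,k,r)` are inverse to each other: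
`∑_{i ≥ 0} t(n,k,i) ⬝ T(i,k,j) = δ_{nj}`.  Since `t(n,k,i) = 0` for `i > n`,
the full sum over `i ≥ 0` is expressed as the sum over `0 ≤ i ≤ N` for any
`N ≥ n`. -/
theorem t_T_inverse_first (n j k : ℕ) (hk : 1 ≤ k) (N : ℕ) (hN : n ≤ N) :
    (∑ i ∈ Finset.range (N + 1), tnum n k i * (Tnum i k j : ℤ)) =
      if n = j then 1 else 0 := by
  rcases le_or_gt j N with hj | hj
  · set A : Matrix (Fin (N+1)) (Fin (N+1)) ℤ := fun a b => stirS1 a b with hA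
    set B : Matrix (Fin (N+1)) (Fin (N+1)) ℤ := fun a b => (stirS2 a b : ℤ) with hB
    have hBA : B * A = 1 := by
      ext a b
      rw [Matrix.mul_apply, Matrix.one_apply]
      have := orth1 (n := a) (j := b) (N := N) (by omega)
      simp only [hA, hB]
      rw [Fin.sum_univ_eq_sum_range (fun m => (stirS2 a m : ℤ) * stirS1 m b), this]
      simp [Fin.ext_iff]
    have hAB : A * B = 1 := mul_eq_one_comm.mpr hBA
    have powA : ∀ (k : ℕ) (a b : Fin (N+1)), (A ^ k) a b = tnum a k b := by
      intro k
      induction k with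
      | zero =>
        intro a b
        rw [pow_zero, Matrix.one_apply]
        simp [tnum, Fin.ext_iff]
      | succ k ih =>
        intro a b
        rw [pow_succ', Matrix.mul_apply]
        simp only [ih]; simp only [hA]
        rw [Fin.sum_univ_eq_sum_range (fun m => stirS1 a m * tnum m k b)]
        rw [tnum]
        symm
        apply Finset.sum_subset
        · intro m hm; rw [Finset.mem_Icc] at hm; rw [mem_range]; omega
        · intro m hm hm2
          rw [mem_range] at hm; rw [Finset.mem_Icc] at hm2
          rcases lt_or_ge (m : ℕ) b with h | h
          · rw [tnum_vanish k m b h, mul_zero]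
          · rw [show stirS1 a m = 0 from stirS1_vanish (by omega), zero_mul]
    have powB : ∀ (k : ℕ) (a b : Fin (N+1)), (B ^ k) a b = (Tnum a k b : ℤ) := by
      intro k
      induction k with
      | zero =>
        intro a b
        rw [pow_zero, Matrix.one_apply]
        simp [Tnum, Fin.ext_iff]
      | succ k ih =>
        intro a b
        rw [pow_succ', Matrix.mul_apply]
        simp only [ih]; simp only [hB]
        rw [Fin.sum_univ_eq_sum_range (fun m => (stirS2 a m : ℤ) * (Tnum m k b : ℤ))]
        rw [Tnum]
        push_cast
        symm
        apply Finset.sum_subset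
        · intro m hm; rw [Finset.mem_Icc] at hm; rw [mem_range]; omega
        · intro m hm hm2
          rw [mem_range] at hm; rw [Finset.mem_Icc] at hm2
          rcases lt_or_ge (m : ℕ) b with h | h
          · rw [Tnum_vanish k m b h]; simp
          · rw [show stirS2 a m = 0 from stirS2_vanish (by omega)]; simp
    have hABk : A ^ k * B ^ k = 1 := by
      clear hk
      induction k with
      | zero => simp
      | succ k ih =>
        rw [pow_succ' A, pow_succ B, mul_assoc, ← mul_assoc (A ^ k), ih, one_mul, hAB]
    have key := congrFun (congrFun hABk ⟨n, by omega⟩) ⟨j, by omega⟩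
    rw [show (A ^ k * B ^ k) ⟨n, by omega⟩ ⟨j, by omega⟩
        = ∑ m : Fin (N+1), (A ^ k) ⟨n, by omega⟩ m * (B ^ k) m ⟨j, by omega⟩ from
        Matrix.mul_apply, Matrix.one_apply] at key
    simp only [powA, powB] at key
    rw [Fin.sum_univ_eq_sum_range (fun m => tnum n k m * (Tnum m k j : ℤ))] at key
    rw [key]
    simp [Fin.ext_iff]
  · rw [Finset.sum_eq_zero, if_neg (by omega)]
    intro i hi
    rw [mem_range] at hi
    rw [Tnum_vanish k i j (by omega)]
    simp

end Aux
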